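/- Let ε_max > 0 and let W : (0, ε_max) → ℝ⁴ be a family of vectors such that W(ε) is time-like for every ε ∈ (0, ε_max). Let Z and Ẑ be any two time-like vectors in ℝ⁴. If |η(W(ε), Z)| / ‖W(ε)‖ → ∞ as ε → 0⁺, then also |η(W(ε), Ẑ)| / ‖W(ε)‖ → ∞ as ε → 0⁺. (Hence the definition of an ultra-relativistic family is independent of the choice of time-like reference vector.) -/

import Mathlib

open Filter Topology

/-- The Minkowski bilinear form on ℝ⁴. -/
noncomputable def eta (x y : Fin 4 → ℝ) : ℝ :=
  -(x 0 * y 0) + x 1 * y 1 + x 2 * y 2 + x 3 * y 3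

/-- The Minkowski "norm" ‖x‖ = √(-η(x,x)) of a time-like (or light-like) vector. -/
noncomputable def mnorm (x : Fin 4 → ℝ) : ℝ := Real.sqrt (-(eta x x))

/-- Euclidean norm of the spatial part. -/
noncomputable def bnorm (x : Fin 4 → ℝ) : ℝ := Real.sqrt ((x 1)^2 + (x 2)^2 + (x 3)^2)

lemma bnorm_nonneg (x : Fin 4 → ℝ) : 0 ≤ bnorm x := Real.sqrt_nonneg _

lemma cs3 (a b c x y z : ℝ) :
    |a*x + b*y + c*z| ≤ Real.sqrt (a^2+b^2+c^2) * Real.sqrt (x^2+y^2+z^2) := by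
  have h1 : (a*x + b*y + c*z)^2 ≤ (a^2+b^2+c^2) * (x^2+y^2+z^2) := by
    nlinarith [sq_nonneg (a*y - b*x), sq_nonneg (a*z - c*x), sq_nonneg (b*z - c*y)]
  calc |a*x + b*y + c*z| = Real.sqrt ((a*x + b*y + c*z)^2) := (Real.sqrt_sq_eq_abs _).symm
    _ ≤ Real.sqrt ((a^2+b^2+c^2) * (x^2+y^2+z^2)) := Real.sqrt_le_sqrt h1
    _ = Real.sqrt (a^2+b^2+c^2) * Real.sqrt (x^2+y^2+z^2) := Real.sqrt_mul (by positivity) _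

lemma bnorm_lt (x : Fin 4 → ℝ) (hx : eta x x < 0) : bnorm x < |x 0| := by
  have h : (x 1)^2 + (x 2)^2 + (x 3)^2 < (x 0)^2 := by
    simp only [eta] at hx; nlinarith
  calc bnorm x < Real.sqrt ((x 0)^2) := by
        apply Real.sqrt_lt_sqrt (by positivity) h
    _ = |x 0| := Real.sqrt_sq_eq_abs _

lemma eta_upper (u v : Fin 4 → ℝ) (hu : bnorm u ≤ |u 0|) :
    |eta u v| ≤ |u 0| * (|v 0| + bnorm v) := by
  have hcs := cs3 (u 1) (u 2) (u 3) (v 1) (v 2) (v 3)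
  have h1 : |eta u v| ≤ |u 0 * v 0| + |u 1 * v 1 + u 2 * v 2 + u 3 * v 3| := by
    simp only [eta]
    calc |-(u 0 * v 0) + u 1 * v 1 + u 2 * v 2 + u 3 * v 3|
        ≤ |-(u 0 * v 0)| + |u 1 * v 1 + u 2 * v 2 + u 3 * v 3| := by
          have := abs_add_le (-(u 0 * v 0)) (u 1 * v 1 + u 2 * v 2 + u 3 * v 3)
          rwa [← add_assoc, ← add_assoc] at this
      _ = |u 0 * v 0| + |u 1 * v 1 + u 2 * v 2 + u 3 * v 3| := by rw [abs_neg]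
  have hb : bnorm u * bnorm v ≤ |u 0| * bnorm v :=
    mul_le_mul_of_nonneg_right hu (bnorm_nonneg v)
  have : |u 1 * v 1 + u 2 * v 2 + u 3 * v 3| ≤ bnorm u * bnorm v := hcs
  rw [abs_mul] at h1
  nlinarith
  
lemma eta_lower (u v : Fin 4 → ℝ) (hu : bnorm u ≤ |u 0|) :
    |u 0| * (|v 0| - bnorm v) ≤ |eta u v| := by
  have hcs := cs3 (u 1) (u 2) (u 3) (v 1) (v 2) (v 3)
  have h1 : |u 0 * v 0| - |u 1 * v 1 + u 2 * v 2 + u 3 * v 3| ≤ |eta u v| := by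
    have := abs_sub_abs_le_abs_sub (u 0 * v 0) (u 1 * v 1 + u 2 * v 2 + u 3 * v 3)
    have heq : |u 0 * v 0 - (u 1 * v 1 + u 2 * v 2 + u 3 * v 3)| = |eta u v| := by
      rw [show u 0 * v 0 - (u 1 * v 1 + u 2 * v 2 + u 3 * v 3) = -(eta u v) by
        simp only [eta]; ring, abs_neg]
    linarith [heq ▸ this]
  have hb : bnorm u * bnorm v ≤ |u 0| * bnorm v :=
    mul_le_mul_of_nonneg_right hu (bnorm_nonneg v)
  have hcs' : |u 1 * v 1 + u 2 * v 2 + u 3 * v 3| ≤ bnorm u * bnorm v := hcs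
  rw [abs_mul] at h1
  nlinarith

/-- The definition of an ultra-relativistic family of time-like vectors is independent of
the choice of time-like reference vector. -/
theorem ultra_relativistic_indep_of_timelike_ref
    (εmax : ℝ) (hεmax : 0 < εmax) (W : ℝ → Fin 4 → ℝ)
    (hW : ∀ ε ∈ Set.Ioo (0:ℝ) εmax, eta (W ε) (W ε) < 0)
    (Z Zhat : Fin 4 → ℝ) (hZ : eta Z Z < 0) (hZhat : eta Zhat Zhat < 0)
    (h : Tendsto (fun ε => |eta (W ε) Z| / mnorm (W ε)) (𝓝[>] (0:ℝ)) atTop) :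
    Tendsto (fun ε => |eta (W ε) Zhat| / mnorm (W ε)) (𝓝[>] (0:ℝ)) atTop := by
  set A : ℝ := |Z 0| + bnorm Z with hA
  set B : ℝ := |Zhat 0| - bnorm Zhat with hB
  have hAp : 0 < A := by
    have := bnorm_lt Z hZ
    have := bnorm_nonneg Z
    linarith
  have hBp : 0 < B := by
    have := bnorm_lt Zhat hZhat
    linarith
  have hc : 0 < B / A := div_pos hBp hAp
  have key : ∀ ε ∈ Set.Ioo (0:ℝ) εmax,
      (B / A) * (|eta (W ε) Z| / mnorm (W ε)) ≤ |eta (W ε) Zhat| / mnorm (W ε) := by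
    intro ε hε
    have hWt := hW ε hε
    have hWu : bnorm (W ε) ≤ |W ε 0| := (bnorm_lt (W ε) hWt).le
    have hm : 0 < mnorm (W ε) := Real.sqrt_pos.mpr (by linarith)
    have h1 : |eta (W ε) Z| ≤ |W ε 0| * A := eta_upper (W ε) Z hWu
    have h2 : |W ε 0| * B ≤ |eta (W ε) Zhat| := eta_lower (W ε) Zhat hWu
    have h3 : (B / A) * |eta (W ε) Z| ≤ |eta (W ε) Zhat| := by
      have : (B / A) * |eta (W ε) Z| ≤ (B / A) * (|W ε 0| * A) :=
        mul_le_mul_of_nonneg_left h1 hc.le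
      have heq : (B / A) * (|W ε 0| * A) = |W ε 0| * B := by
        field_simp
      exact le_trans (heq ▸ this) h2
    rw [mul_div_assoc']
    exact div_le_div_of_nonneg_right h3 hm.le
  have hmem : Set.Ioo (0:ℝ) εmax ∈ 𝓝[>] (0:ℝ) :=
    Ioo_mem_nhdsGT_of_mem ⟨le_refl 0, hεmax⟩
  exact tendsto_atTop_mono' _ (eventually_of_mem hmem key) (h.const_mul_atTop hc)
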